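/- arXiv:1503.05174 — 2 statements merged into one kernel-verified Lean document; each statement's English description precedes it below -/
import Mathlib

section
/- Let σ and η be elements of a complex Hilbert space and let ε ≥ 0 with ε < 1/2. Suppose (1) ‖σ‖ = 1; (2) |⟨σ, η⟩ - 1| ≤ ε; (3) |⟨σ, τ⟩| ≤ ε‖τ‖ for every τ with ⟨τ, η⟩ = 0. Then |‖η‖² - 1| ≤ 10ε. -/
set_option maxHeartbeats 1000000 in
/-- Lemma 5 of the paper: the two-plane Hilbert space lemma used in the
Bergman kernel asymptotics. -/
theorem stmt0 {H : Type*} [NormedAddCommGroup H] [InnerProductSpace ℂ H]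
    (σ η : H) (ε : ℝ) (hε0 : 0 ≤ ε) (hε : ε < 1 / 2)
    (h1 : ‖σ‖ = 1)
    (h2 : ‖(inner ℂ σ η : ℂ) - 1‖ ≤ ε)
    (h3 : ∀ τ : H, (inner ℂ τ η : ℂ) = 0 → ‖(inner ℂ σ τ : ℂ)‖ ≤ ε * ‖τ‖) :
    |‖η‖ ^ 2 - 1| ≤ 10 * ε := by
  have hη : η ≠ 0 := by
    intro h
    rw [h, inner_zero_right] at h2
    simp at h2
    linarith
  set t : ℝ := ‖η‖ ^ 2 with htdef
  have ht : 0 < t := pow_pos (norm_pos_iff.mpr hη) 2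
  have htC : (t : ℂ) ≠ 0 := by exact_mod_cast ht.ne'
  set a : ℂ := (inner ℂ σ η : ℂ) with ha
  set c : ℂ := (starRingEnd ℂ) a / (t : ℂ) with hc
  set τ : H := σ - c • η with hτ
  have hηη : (inner ℂ η η : ℂ) = (t : ℂ) := by
    rw [inner_self_eq_norm_sq_to_K]; norm_cast
  have hτη : (inner ℂ τ η : ℂ) = 0 := by
    rw [hτ, inner_sub_left, inner_smul_left, hηη, hc]
    rw [map_div₀, Complex.conj_conj, Complex.conj_ofReal]
    field_simp
    rw [ha, sub_self]
  -- inner σ τ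
  have hσσ : (inner ℂ σ σ : ℂ) = 1 := by
    rw [inner_self_eq_norm_sq_to_K, h1]; norm_num
  set s : ℝ := ‖a‖ ^ 2 with hs
  have hca : c * a = ((s / t : ℝ) : ℂ) := by
    rw [hc, hs]
    rw [div_mul_eq_mul_div]
    rw [RCLike.conj_mul]
    push_cast
    ring_nf
    exact mul_comm _ _
  have hστ : (inner ℂ σ τ : ℂ) = ((1 - s / t : ℝ) : ℂ) := by
    rw [hτ, inner_sub_right, inner_smul_right, hσσ, hca]
    push_cast; ring
  -- ‖τ‖² = 1 - s/t
  have hττ' : ‖τ‖ ^ 2 = 1 - s / t := by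
    have h1' : (inner ℂ τ τ : ℂ) = (inner ℂ τ σ : ℂ) := by
      conv_lhs => rw [hτ, inner_sub_right, inner_smul_right, hτη]
      rw [hτ]
      ring
    have h2' : (inner ℂ τ τ : ℂ) = ((1 - s / t : ℝ) : ℂ) := by
      rw [h1', ← inner_conj_symm, hστ, Complex.conj_ofReal]
    have h3' := congrArg Complex.re h2'
    rw [Complex.ofReal_re] at h3'
    rw [@norm_sq_eq_re_inner ℂ]
    exact h3'
  have hu0 : 0 ≤ 1 - s / t := by rw [← hττ']; positivity
  have hτn : 0 ≤ ‖τ‖ := norm_nonneg _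
  have h3' := h3 τ hτη
  rw [hστ] at h3'
  rw [Complex.norm_real, Real.norm_eq_abs, abs_of_nonneg hu0, ← hττ'] at h3'
  have hτε : ‖τ‖ ≤ ε := by nlinarith
  have hw2 : ‖τ‖ ^ 2 ≤ ε ^ 2 := by nlinarith
  have hst : s = t * (1 - ‖τ‖ ^ 2) := by
    rw [hττ']
    field_simp
    ring
  -- bounds on s
  have hanorm1 : 1 - ε ≤ ‖a‖ := by
    have := norm_sub_norm_le (1 : ℂ) a
    simp only [norm_one] at this
    rw [norm_sub_rev] at h2
    linarith
  have hanorm2 : ‖a‖ ≤ 1 + ε := by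
    have := norm_le_norm_add_norm_sub' a 1
    simp only [norm_one] at this
    linarith
  have hs1 : (1 - ε) ^ 2 ≤ s := by
    rw [hs]; nlinarith
  have hs2 : s ≤ (1 + ε) ^ 2 := by
    rw [hs]; nlinarith
  rw [abs_le]
  have hpos : (0:ℝ) < 1 - ε ^ 2 := by nlinarith
  constructor
  · nlinarith [mul_nonneg ht.le (sq_nonneg ‖τ‖), hst, hs1]
  · have hmul : t * (‖τ‖ ^ 2) ≤ t * ε ^ 2 := mul_le_mul_of_nonneg_left hw2 ht.le
    have e : t * (1 - ε ^ 2) ≤ (1 + ε) ^ 2 := by nlinarith [hmul]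
    nlinarith [e, hpos, ht.le, sq_nonneg ε, mul_nonneg hε0 (sq_nonneg ε)]
end

section
/- Let g : Δ* → GL(N+1, ℂ) be holomorphic with a meromorphic extension over 0, factorized as g(t) = t^A R(t) with A = diag(λ₀, …, λ_N), λ₀ = 0 ≥ λ₁ ≥ ⋯ ≥ λ_N integers, and R holomorphic invertible on Δ with R(0) = 1. Let Γ : Δ → ℂ^{N+1}∖{0} be holomorphic with Γ(0) having nonzero component in the zero-eigenspace of A (i.e., nonzero first coordinate block). Define γ̃(t) = R(t)^{−1} t^{−A} Γ(t). Then both γ̃(t) and g(t)γ̃(t) = Γ(t) are holomorphic and nonvanishing at t = 0. -/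
open Matrix in
lemma detDiffOn {n : ℕ} (M : ℂ → Matrix (Fin n) (Fin n) ℂ) (s : Set ℂ)
    (h : ∀ i j, DifferentiableOn ℂ (fun t => M t i j) s) :
    DifferentiableOn ℂ (fun t => (M t).det) s := by
  simp only [Matrix.det_apply']
  exact DifferentiableOn.fun_sum fun σ _ =>
    DifferentiableOn.const_mul (DifferentiableOn.fun_finset_prod fun i _ => h (σ i) i) _

/-- The construction in the proof of Lemma 8 of Section 5.2: with `λ₀ = 0`,
all `λ_α ≤ 0`, `R(0) = 1`, and `Γ(0)` having a nonzero component in the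
zero-eigenspace of `A`, the map `γ̃(t) = R(t)⁻¹ t^{-A} Γ(t)` and
`g(t)γ̃(t) = Γ(t)` are both holomorphic and nonvanishing at `t = 0`. -/
theorem stmt18 (N : ℕ) (lam : Fin (N + 1) → ℤ) (hanti : Antitone lam)
    (hlam0 : lam 0 = 0) (hle : ∀ i, lam i ≤ 0)
    (R : ℂ → Matrix (Fin (N + 1)) (Fin (N + 1)) ℂ)
    (hRhol : ∀ i j, DifferentiableOn ℂ (fun t => R t i j) (Metric.ball (0 : ℂ) 1))
    (hRinv : ∀ t ∈ Metric.ball (0 : ℂ) 1, IsUnit (R t).det)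
    (hR0 : R 0 = 1)
    (Γ : ℂ → Fin (N + 1) → ℂ)
    (hΓ : DifferentiableOn ℂ Γ (Metric.ball (0 : ℂ) 1))
    (hΓne : ∀ t ∈ Metric.ball (0 : ℂ) 1, Γ t ≠ 0)
    (hΓ0 : ∃ i, lam i = 0 ∧ Γ 0 i ≠ 0)
    (γ : ℂ → Fin (N + 1) → ℂ)
    (hγdef : ∀ t : ℂ, γ t = (R t)⁻¹.mulVec fun i => t ^ (-(lam i)) * Γ t i) :
    DifferentiableOn ℂ γ (Metric.ball (0 : ℂ) 1) ∧ γ 0 ≠ 0 ∧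
      (∀ t ∈ Metric.ball (0 : ℂ) 1 \ {0},
        (Matrix.diagonal (fun i => t ^ lam i) * R t).mulVec (γ t) = Γ t) ∧
      Γ 0 ≠ 0 := by
  have hball : (0 : ℂ) ∈ Metric.ball (0 : ℂ) 1 := by simp
  set s := Metric.ball (0 : ℂ) 1
  have hdet : DifferentiableOn ℂ (fun t => (R t).det) s := detDiffOn R s hRhol
  have hadj : ∀ i j, DifferentiableOn ℂ (fun t => (R t).adjugate i j) s := by
    intro i j
    simp only [Matrix.adjugate_apply]
    apply detDiffOn
    intro k l
    simp only [Matrix.updateRow_apply]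
    by_cases hk : k = j
    · simp [hk]
    · simpa [hk] using hRhol k l
  have hinv : ∀ i j, DifferentiableOn ℂ (fun t => (R t)⁻¹ i j) s := by
    intro i j
    simp only [Matrix.inv_def, Matrix.smul_apply, Ring.inverse_eq_inv', smul_eq_mul]
    exact (hdet.inv fun t ht => (hRinv t ht).ne_zero).mul (hadj i j)
  have hpow : ∀ j : Fin (N + 1), DifferentiableOn ℂ (fun t : ℂ => t ^ (-(lam j))) s := by
    intro j
    have h1 : ∀ t : ℂ, t ^ (-(lam j)) = t ^ ((-(lam j)).toNat) := by
      intro t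
      rw [← zpow_natCast, Int.toNat_of_nonneg (by linarith [hle j])]
    exact DifferentiableOn.congr ((differentiable_pow _).differentiableOn) fun t _ => h1 t
  have hΓi : ∀ j, DifferentiableOn ℂ (fun t => Γ t j) s := fun j =>
    differentiableOn_pi.mp hΓ j
  constructor
  · have hγeq : γ = fun t => (R t)⁻¹.mulVec fun i => t ^ (-(lam i)) * Γ t i := funext hγdef
    rw [hγeq]
    rw [differentiableOn_pi]
    intro i
    simp only [Matrix.mulVec, dotProduct]
    exact DifferentiableOn.fun_sum fun j _ =>
      (hinv i j).mul ((hpow j).mul (hΓi j))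
  refine ⟨?_, ?_, hΓne 0 hball⟩
  · obtain ⟨i, hli, hΓ0i⟩ := hΓ0
    have : γ 0 = fun i => (0 : ℂ) ^ (-(lam i)) * Γ 0 i := by
      rw [hγdef 0, hR0, inv_one, Matrix.one_mulVec]
    intro hc
    apply hΓ0i
    have := congrFun this i
    rw [hc] at this
    simp only [Pi.zero_apply] at this
    rw [hli] at this
    simpa using this.symm
  · rintro t ⟨htb, htne⟩
    have ht0 : t ≠ 0 := by simpa using htne
    rw [hγdef, Matrix.mulVec_mulVec, Matrix.mul_assoc,
      Matrix.mul_nonsing_inv _ (hRinv t htb), Matrix.mul_one]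
    funext i
    rw [Matrix.mulVec_diagonal, ← mul_assoc, ← zpow_add₀ ht0, add_neg_cancel, zpow_zero, one_mul]
end
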